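/- Let n ≥ 1 and k ≥ 1 be integers and let μ¹, …, μᵏ be partitions of n, where μˢ has parts μ₁ˢ ≥ μ₂ˢ ≥ …. If the rigidity condition d_μ = 0 holds, i.e. (k−2)·n² + 2 = Σ_{s=1}^{k} Σ_i (μ_iˢ)², then Σ_{s=1}^{k} μ₁ˢ > (k−2)·n. (This is the inequality guaranteeing that Katz's middle-convolution move A strictly decreases the rank, so Goursat's reduction algorithm terminates.) -/

import Mathlib

/-- Normalizing the elaborated list coercion: mapping `f : ℤ → ℤ` over the
coercion of a `List ℕ` equals mapping `fun x : ℕ => f x` directly. -/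
theorem coe_map_fix (l : List ℕ) (f : ℤ → ℤ) :
    ((l : List ℤ).map f) = (l.map (fun x : ℕ => f (x : ℤ))) := by
  induction l with
  | nil => rfl
  | cons a t ih => simp only [List.map_cons] at *; exact congrArg _ ih

/-- If `μ¹, …, μᵏ` are partitions of `n ≥ 1` (non-increasing lists of positive
integers summing to `n`) satisfying the rigidity condition
`(k−2)·n² + 2 = Σ_s Σ_i (μᵢˢ)²`, then `Σ_s μ₁ˢ > (k−2)·n`. -/
theorem stmt_1 (n k : ℕ) (hn : 1 ≤ n) (hk : 1 ≤ k) (μ : Fin k → List ℕ)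
    (hsorted : ∀ s, (μ s).Pairwise (· ≥ ·))
    (hpos : ∀ s, ∀ x ∈ μ s, 1 ≤ x)
    (hsum : ∀ s, (μ s).sum = n)
    (hrigid : ((k : ℤ) - 2) * (n : ℤ) ^ 2 + 2 =
      ∑ s : Fin k, (((μ s).map (fun x => (x : ℤ) ^ 2)).sum)) :
    (∑ s : Fin k, ((μ s).head! : ℤ)) > ((k : ℤ) - 2) * (n : ℤ) := by
  simp only [coe_map_fix] at hrigid
  have key : ∀ s : Fin k, ((μ s).map (fun x : ℕ => (x : ℤ) ^ 2)).sum ≤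
      ((μ s).head! : ℤ) * n := by
    intro s
    have hne : μ s ≠ [] := by
      intro h
      have := hsum s
      rw [h] at this
      simp at this
      omega
    obtain ⟨a, l, hal⟩ := List.exists_cons_of_ne_nil hne
    have hhead : ∀ x ∈ μ s, x ≤ (μ s).head! := by
      intro x hx
      have hs := hsorted s
      rw [hal] at hx hs ⊢
      simp only [List.head!_cons]
      rcases List.mem_cons.mp hx with rfl | hx
      · exact le_refl _
      · exact (List.pairwise_cons.mp hs).1 x hx
    have h1 : ((μ s).map (fun x : ℕ => (x : ℤ) ^ 2)).sum ≤
        ((μ s).map (fun x : ℕ => ((μ s).head! : ℤ) * x)).sum := by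
      apply List.sum_le_sum
      intro x hx
      have hxle : (x : ℤ) ≤ ((μ s).head! : ℤ) := by exact_mod_cast hhead x hx
      have hx0 : (0 : ℤ) ≤ (x : ℤ) := Int.natCast_nonneg x
      nlinarith
    have h2 : ((μ s).map (fun x : ℕ => ((μ s).head! : ℤ) * x)).sum =
        ((μ s).head! : ℤ) * ((μ s).map (fun x : ℕ => (x : ℤ))).sum := by
      rw [← List.sum_map_mul_left]
    have h3 : ((μ s).map (fun x : ℕ => (x : ℤ))).sum = (n : ℤ) := by
      rw [← hsum s]
      exact (Nat.cast_list_sum (μ s)).symm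
    rw [h2, h3] at h1
    exact h1
  have htot : ((k : ℤ) - 2) * (n : ℤ) ^ 2 + 2 ≤
      (∑ s : Fin k, ((μ s).head! : ℤ)) * n := by
    rw [hrigid, Finset.sum_mul]
    exact Finset.sum_le_sum fun s _ => key s
  have hn' : (1 : ℤ) ≤ n := by exact_mod_cast hn
  nlinarith [htot]
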